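/- Let n be even, Q as above, and let p be obtained from Q by setting p_{2i-1} = Q_{2i-1} + δ_i and p_{2i} = Q_{2i} - δ_i where each δ_i is a real number. If at least K of the δ_i satisfy δ_i < -c for some c > 0, then p is at distance at least K·c in total variation from every monotone decreasing distribution on {1,...,n}. -/

import Mathlib

open Finset

theorem perturbed_Q_far_from_monotone (n : ℕ) (hn : Even n) (hn2 : 2 ≤ n)
    (δ : ℕ → ℝ) (c : ℝ) (hc : 0 < c) (K : ℕ)
    (hK : K ≤ ((Finset.Icc 1 (n / 2)).filter fun i => δ i < -c).card)
    (p : ℕ → ℝ)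
    (hp : ∀ i ∈ Finset.Icc 1 (n / 2),
      p (2 * i - 1) = (5 / (4 * n) + 1 / (2 * (n : ℝ) ^ 2) - (i : ℝ) / (n : ℝ) ^ 2) + δ i ∧
      p (2 * i) = (5 / (4 * n) + 1 / (2 * (n : ℝ) ^ 2) - (i : ℝ) / (n : ℝ) ^ 2) - δ i) :
    ∀ q : ℕ → ℝ, (∀ i ∈ Finset.Icc 1 n, 0 ≤ q i) → (∑ i ∈ Finset.Icc 1 n, q i = 1) →
      (∀ i ∈ Finset.Icc 1 n, ∀ j ∈ Finset.Icc 1 n, i ≤ j → q j ≤ q i) →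
      (K : ℝ) * c ≤ (1 / 2) * ∑ i ∈ Finset.Icc 1 n, |p i - q i| := by
  intro q hq0 hq1 hqmono
  obtain ⟨m, hm⟩ := hn
  set S := (Finset.Icc 1 (n / 2)).filter fun i => δ i < -c with hS
  have hmemS : ∀ i ∈ S, 1 ≤ i ∧ i ≤ n / 2 ∧ δ i < -c := by
    intro i hi
    simp only [hS, Finset.mem_filter, Finset.mem_Icc] at hi
    exact ⟨hi.1.1, hi.1.2, hi.2⟩
  have hmem1 : ∀ i ∈ S, 2 * i - 1 ∈ Finset.Icc 1 n := by
    intro i hi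
    obtain ⟨h1, h2, _⟩ := hmemS i hi
    simp only [Finset.mem_Icc]; omega
  have hmem2 : ∀ i ∈ S, 2 * i ∈ Finset.Icc 1 n := by
    intro i hi
    obtain ⟨h1, h2, _⟩ := hmemS i hi
    simp only [Finset.mem_Icc]; omega
  have key : ∀ i ∈ S, 2 * c ≤ |p (2 * i - 1) - q (2 * i - 1)| + |p (2 * i) - q (2 * i)| := by
    intro i hi
    obtain ⟨h1, h2, hδ⟩ := hmemS i hi
    obtain ⟨hp1, hp2⟩ := hp i (by simp [Finset.mem_Icc]; omega)
    have hqle : q (2 * i) ≤ q (2 * i - 1) :=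
      hqmono _ (hmem1 i hi) _ (hmem2 i hi) (by omega)
    have e1 := le_abs_self (p (2 * i) - q (2 * i))
    have e2 := neg_abs_le (p (2 * i - 1) - q (2 * i - 1))
    linarith
  set A := S.image (fun i => 2 * i - 1) with hA
  set B := S.image (fun i => 2 * i) with hB
  have hdisj : Disjoint A B := by
    rw [Finset.disjoint_left]
    intro a ha hb
    simp only [hA, hB, Finset.mem_image] at ha hb
    obtain ⟨i, hi, hia⟩ := ha
    obtain ⟨j, hj, hja⟩ := hb
    obtain ⟨hi1, _, _⟩ := hmemS i hi
    omega
  have hsub : A ∪ B ⊆ Finset.Icc 1 n := by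
    intro a ha
    rw [Finset.mem_union] at ha
    rcases ha with ha | ha <;> simp only [hA, hB, Finset.mem_image] at ha <;>
      obtain ⟨i, hi, hia⟩ := ha
    · exact hia ▸ hmem1 i hi
    · exact hia ▸ hmem2 i hi
  have hsumA : ∑ i ∈ S, |p (2 * i - 1) - q (2 * i - 1)| = ∑ j ∈ A, |p j - q j| := by
    rw [hA, Finset.sum_image]
    intro i hi j hj hij
    obtain ⟨hi1, _, _⟩ := hmemS i hi
    obtain ⟨hj1, _, _⟩ := hmemS j hj
    simp only at hij
    omega
  have hsumB : ∑ i ∈ S, |p (2 * i) - q (2 * i)| = ∑ j ∈ B, |p j - q j| := by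
    rw [hB, Finset.sum_image]
    intro i hi j hj hij
    simp only at hij
    omega
  have h3 : ∑ i ∈ S, (|p (2 * i - 1) - q (2 * i - 1)| + |p (2 * i) - q (2 * i)|)
      ≤ ∑ i ∈ Finset.Icc 1 n, |p i - q i| := by
    rw [Finset.sum_add_distrib, hsumA, hsumB, ← Finset.sum_union hdisj]
    exact Finset.sum_le_sum_of_subset_of_nonneg hsub (fun i _ _ => abs_nonneg _)
  have h2 : ∑ i ∈ S, (2 * c) ≤ ∑ i ∈ S, (|p (2 * i - 1) - q (2 * i - 1)| + |p (2 * i) - q (2 * i)|) :=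
    Finset.sum_le_sum key
  have h1 : (K : ℝ) * (2 * c) ≤ ∑ i ∈ S, (2 * c) := by
    rw [Finset.sum_const, nsmul_eq_mul]
    have : (K : ℝ) ≤ S.card := by exact_mod_cast hK
    nlinarith
  linarith
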